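/- For every integer p ≥ 0 there exist integers i, j ≥ 0 such that u_{i+s} = u_{j+s} for all 0 ≤ s < p, and (u_{i+p}, u_{i+p+1}, u_{i+p+2}, u_{i+p+3}, u_{i+p+4}) = (0,0,2,0,0) while (u_{j+p}, u_{j+p+1}, u_{j+p+2}, u_{j+p+3}, u_{j+p+4}) = (0,0,0,0,0). -/

import Mathlib

/-- The Tribonacci morphism `0→01, 1→02, 2→0`. -/
def tribMorph : ℕ → List ℕ
  | 0 => [0, 1]
  | 1 => [0, 2]
  | _ => [0]

/-- Iterates of the Tribonacci morphism applied to `0`; `tribBlock k` is a prefix of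
the Tribonacci word of length at least `k + 1`. -/
def tribBlock : ℕ → List ℕ
  | 0 => [0]
  | k + 1 => (tribBlock k).flatMap tribMorph

/-- The Tribonacci word `TR = 0102010⋯`, the fixed point starting with `0` of the
morphism `0→01, 1→02, 2→0`. -/
def trib (i : ℕ) : ℕ := (tribBlock (i + 1)).getD i 0

/-- `N_c(i,m,n)`: the number of occurrences of the letter `c` in the `m × n` word
rectangle whose `(k,ℓ)` entry is `t_{i+k+ℓ}`. -/
def tribN (c i m n : ℕ) : ℕ :=
  ∑ k ∈ Finset.range m, ∑ l ∈ Finset.range n, if trib (i + k + l) = c then 1 else 0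

/-- `TR2`: the image of the Tribonacci word under the coding `0→0, 1→0, 2→2`. -/
def trib2 (i : ℕ) : ℕ := if trib i = 2 then 2 else 0

-- basic lemmas
lemma flatMap_mono {l l' : List ℕ} (h : l <+: l') :
    l.flatMap tribMorph <+: l'.flatMap tribMorph := by
  obtain ⟨t, rfl⟩ := h
  exact ⟨t.flatMap tribMorph, by simp⟩

lemma tribBlock_prefix_succ (k : ℕ) : tribBlock k <+: tribBlock (k + 1) := by
  induction k with
  | zero => exact ⟨[1], rfl⟩
  | succ k ih => exact flatMap_mono ih

lemma tribBlock_prefix {k m : ℕ} (h : k ≤ m) : tribBlock k <+: tribBlock m := by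
  induction m with
  | zero => simpa [Nat.le_zero.mp h]
  | succ m ih =>
    rcases Nat.lt_or_ge k (m+1) with h' | h'
    · exact (ih (Nat.lt_succ_iff.mp h')).trans (tribBlock_prefix_succ m)
    · have : k = m + 1 := le_antisymm h h'
      simp [this]

lemma length_tribMorph (c : ℕ) : 1 ≤ (tribMorph c).length := by
  rcases c with _ | _ | c <;> simp [tribMorph]

lemma length_flatMap_ge (l : List ℕ) : l.length ≤ (l.flatMap tribMorph).length := by
  induction l with
  | nil => simp
  | cons c t ih =>
    rw [List.flatMap_cons, List.length_append]
    have := length_tribMorph c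
    simp only [List.length_cons]
    omega

lemma tribBlock_cons (k : ℕ) : ∃ t, tribBlock k = 0 :: t := by
  induction k with
  | zero => exact ⟨[], rfl⟩
  | succ k ih =>
    obtain ⟨t, ht⟩ := ih
    exact ⟨1 :: t.flatMap tribMorph, by simp [tribBlock, ht, tribMorph]⟩

lemma length_tribBlock (k : ℕ) : k < (tribBlock k).length := by
  induction k with
  | zero => simp [tribBlock]
  | succ k ih =>
    obtain ⟨t, ht⟩ := tribBlock_cons k
    have h2 := length_flatMap_ge t
    have : (tribBlock (k+1)).length = 2 + (t.flatMap tribMorph).length := by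
      show ((tribBlock k).flatMap tribMorph).length = _
      rw [ht, List.flatMap_cons, List.length_append]
      simp [tribMorph]
    have hlt : (tribBlock k).length = 1 + t.length := by simp [ht]; omega
    omega

def Pref (l : List ℕ) : Prop := ∃ K, l <+: tribBlock K

lemma Pref.mono {l l' : List ℕ} (h : l <+: l') (h' : Pref l') : Pref l := by
  obtain ⟨K, hK⟩ := h'
  exact ⟨K, h.trans hK⟩

lemma Pref.flatMap {l : List ℕ} (h : Pref l) : Pref (l.flatMap tribMorph) := by
  obtain ⟨K, hK⟩ := h
  exact ⟨K + 1, flatMap_mono hK⟩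

lemma trib_eq_of_pref {l : List ℕ} (h : Pref l) {n : ℕ} (hn : n < l.length) :
    trib n = l.getD n 0 := by
  obtain ⟨K, hK⟩ := h
  have h1 : tribBlock (n+1) <+: tribBlock (max (n+1) K) := tribBlock_prefix (le_max_left _ _)
  have h2 : l <+: tribBlock (max (n+1) K) := hK.trans (tribBlock_prefix (le_max_right _ _))
  have hn1 : n < (tribBlock (n+1)).length := Nat.lt_trans (Nat.lt_succ_self n) (length_tribBlock (n+1))
  have hbig : n < (tribBlock (max (n+1) K)).length := lt_of_lt_of_le hn1 h1.length_le
  rw [trib, List.getD_eq_getElem _ _ hn1, List.getD_eq_getElem _ _ hn,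
    h1.getElem hn1, h2.getElem hn]

def Good (w : List ℕ) (k : ℕ) : Prop :=
  Pref (w ++ [2,0,1]) ∧ Pref (tribBlock k ++ (w ++ [0,1,0]))

def s1 (w : List ℕ) : List ℕ := w.flatMap tribMorph ++ [0]

lemma length_s1 (w : List ℕ) : w.length + 1 ≤ (s1 w).length := by
  have := length_flatMap_ge w
  simp only [s1, List.length_append, List.length_cons, List.length_nil]
  omega

lemma good_step {w : List ℕ} {k : ℕ} (h : Good w k) : Good (s1 (s1 (s1 w))) (k + 3) := by
  obtain ⟨h1, h2⟩ := h
  -- step 1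
  have h1a : Pref (s1 w ++ [0,1,0,2]) := by
    have := h1.flatMap
    simpa [s1, List.flatMap_append, tribMorph] using this
  have h2a : Pref (tribBlock (k+1) ++ (s1 w ++ [1,0,2,0,1])) := by
    have := h2.flatMap
    simpa [s1, tribBlock, List.flatMap_append, tribMorph] using this
  -- step 2
  have h1b : Pref (s1 (s1 w) ++ [1,0,2,0,1,0]) := by
    have := h1a.flatMap
    simpa [s1, List.flatMap_append, tribMorph] using this
  have h2b : Pref (tribBlock (k+2) ++ (s1 (s1 w) ++ [2,0,1,0,0,1,0,2])) := by
    have := h2a.flatMap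
    simpa [s1, tribBlock, List.flatMap_append, tribMorph] using this
  -- step 3
  have h1c : Pref (s1 (s1 (s1 w)) ++ [2,0,1,0,0,1,0,2,0,1]) := by
    have := h1b.flatMap
    simpa [s1, List.flatMap_append, tribMorph] using this
  have h2c : Pref (tribBlock (k+3) ++ (s1 (s1 (s1 w)) ++ [0,1,0,2,0,1,0,1,0,2,0,1,0])) := by
    have := h2b.flatMap
    simpa [s1, tribBlock, List.flatMap_append, tribMorph] using this
  constructor
  · refine Pref.mono ?_ h1c
    refine ⟨[0,0,1,0,2,0,1], ?_⟩
    simp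
  · refine Pref.mono ?_ h2c
    refine ⟨[2,0,1,0,1,0,2,0,1,0], ?_⟩
    simp

lemma s1s1_ends (x : List ℕ) : ∃ z, s1 (s1 x) = z ++ [1, 0] :=
  ⟨(x.flatMap tribMorph).flatMap tribMorph ++ [0], by simp [s1, tribMorph]⟩

lemma good_base : Good (tribBlock 5 ++ [0,1,0]) 5 := by
  constructor
  · exact ⟨7, by decide⟩
  · exact ⟨7, by decide⟩

lemma exists_good (n : ℕ) : ∃ w k z, Good w k ∧ w = z ++ [1,0] ∧ n ≤ z.length := by
  induction n with
  | zero =>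
    exact ⟨tribBlock 5 ++ [0,1,0], 5, tribBlock 5 ++ [0], good_base, by simp, Nat.zero_le _⟩
  | succ n ih =>
    obtain ⟨w, k, z, hg, hw, hz⟩ := ih
    obtain ⟨z', hz'⟩ := s1s1_ends (s1 w)
    refine ⟨_, k + 3, z', good_step hg, hz', ?_⟩
    have l1 := length_s1 w
    have l2 := length_s1 (s1 w)
    have l3 := length_s1 (s1 (s1 w))
    have hwlen : w.length = z.length + 2 := by rw [hw]; simp
    have h5 : (s1 (s1 (s1 w))).length = z'.length + 2 := by rw [hz']; simp
    omega

theorem trib2_common_factor_distinct_extensions (p : ℕ) :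
    ∃ i j : ℕ, (∀ s : ℕ, s < p → trib2 (i + s) = trib2 (j + s)) ∧
      trib2 (i + p) = 0 ∧ trib2 (i + p + 1) = 0 ∧ trib2 (i + p + 2) = 2 ∧
      trib2 (i + p + 3) = 0 ∧ trib2 (i + p + 4) = 0 ∧
      trib2 (j + p) = 0 ∧ trib2 (j + p + 1) = 0 ∧ trib2 (j + p + 2) = 0 ∧
      trib2 (j + p + 3) = 0 ∧ trib2 (j + p + 4) = 0 := by
  obtain ⟨w, k, z, ⟨h1, h2⟩, hw, hp⟩ := exists_good p
  set B := tribBlock k with hB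
  set L := z.length with hL
  have hwlen : w.length = L + 2 := by rw [hw]; simp [hL]
  refine ⟨L - p, B.length + (L - p), ?_, ?_, ?_, ?_, ?_, ?_, ?_, ?_, ?_, ?_, ?_⟩
  all_goals (
    first
    | (intro s hs
       have hlt : L - p + s < L := by omega
       have e1 : trib (L - p + s) = z.getD (L - p + s) 0 := by
         rw [trib_eq_of_pref h1 (by simp [hwlen]; omega)]
         rw [List.getD_append _ _ _ _ (by omega), hw, List.getD_append _ _ _ _ (by omega)]
       have e2 : trib (B.length + (L - p) + s) = z.getD (L - p + s) 0 := by
         rw [trib_eq_of_pref h2 (by simp [hwlen]; omega)]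
         rw [show B.length + (L - p) + s = B.length + (L - p + s) by omega,
           List.getD_append_right _ _ _ _ (by omega)]
         simp only [Nat.add_sub_cancel_left]
         rw [List.getD_append _ _ _ _ (by omega), hw, List.getD_append _ _ _ _ (by omega)]
       rw [trib2, trib2, e1, e2])
    | skip)
  all_goals (
    have HW1 : ∀ n, n < L + 5 → trib n = (w ++ [2,0,1]).getD n 0 := fun n hn =>
      trib_eq_of_pref h1 (by simp [hwlen]; omega)
    have HW2 : ∀ n, n < L + 5 → trib (B.length + n) = (w ++ [0,1,0]).getD n 0 := by
      intro n hn
      rw [trib_eq_of_pref h2 (by simp [hwlen]; omega),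
        List.getD_append_right _ _ _ _ (Nat.le_add_right _ _)]
      simp
    first
    | (rw [show L - p + p + 4 = L + 4 from by omega]
       have A4 : trib (L+4) = 1 := by
         rw [HW1 _ (by omega), List.getD_append_right _ _ _ _ (by omega),
           show L + 4 - w.length = 2 from by omega]; rfl
       simp [trib2, A4])
    | (rw [show L - p + p + 3 = L + 3 from by omega]
       have A3 : trib (L+3) = 0 := by
         rw [HW1 _ (by omega), List.getD_append_right _ _ _ _ (by omega),
           show L + 3 - w.length = 1 from by omega]; rfl
       simp [trib2, A3])
    | (rw [show L - p + p + 2 = L + 2 from by omega]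
       have A2 : trib (L+2) = 2 := by
         rw [HW1 _ (by omega), List.getD_append_right _ _ _ _ (by omega),
           show L + 2 - w.length = 0 from by omega]; rfl
       simp [trib2, A2])
    | (rw [show L - p + p + 1 = L + 1 from by omega]
       have A1 : trib (L+1) = 0 := by
         rw [HW1 _ (by omega), List.getD_append _ _ _ _ (by omega), hw,
           List.getD_append_right _ _ _ _ (by omega), show L + 1 - z.length = 1 from by omega]; rfl
       simp [trib2, A1])
    | (rw [show L - p + p = L from by omega]
       have A0 : trib L = 1 := by
         rw [HW1 L (by omega), List.getD_append _ _ _ _ (by omega), hw,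
           List.getD_append_right _ _ _ _ (by omega), Nat.sub_self]; rfl
       simp [trib2, A0])
    | (rw [show B.length + (L - p) + p + 4 = B.length + (L + 4) from by omega]
       have C4 : trib (B.length + (L+4)) = 0 := by
         rw [HW2 _ (by omega), List.getD_append_right _ _ _ _ (by omega),
           show L + 4 - w.length = 2 from by omega]; rfl
       simp [trib2, C4])
    | (rw [show B.length + (L - p) + p + 3 = B.length + (L + 3) from by omega]
       have C3 : trib (B.length + (L+3)) = 1 := by
         rw [HW2 _ (by omega), List.getD_append_right _ _ _ _ (by omega),
           show L + 3 - w.length = 1 from by omega]; rfl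
       simp [trib2, C3])
    | (rw [show B.length + (L - p) + p + 2 = B.length + (L + 2) from by omega]
       have C2 : trib (B.length + (L+2)) = 0 := by
         rw [HW2 _ (by omega), List.getD_append_right _ _ _ _ (by omega),
           show L + 2 - w.length = 0 from by omega]; rfl
       simp [trib2, C2])
    | (rw [show B.length + (L - p) + p + 1 = B.length + (L + 1) from by omega]
       have C1 : trib (B.length + (L+1)) = 0 := by
         rw [HW2 _ (by omega), List.getD_append _ _ _ _ (by omega), hw,
           List.getD_append_right _ _ _ _ (by omega), show L + 1 - z.length = 1 from by omega]; rfl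
       simp [trib2, C1])
    | (rw [show B.length + (L - p) + p = B.length + L from by omega]
       have C0 : trib (B.length + L) = 1 := by
         rw [HW2 L (by omega), List.getD_append _ _ _ _ (by omega), hw,
           List.getD_append_right _ _ _ _ (by omega), Nat.sub_self]; rfl
       simp [trib2, C0]))
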